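/- Consider the linear ODE/PDE u̇ = Au + Bu with A skew-adjoint satisfying A e_k = ik e_k (‖e_k‖ = 1, k ∈ ℤ) and B commuting with A, B e_k = λ_k e_k. Apply the exponential Euler step U^{n+1} = e^{hA}U^n + h φ₁(hA) B U^n. Then the error after n steps is U(nh) − Uⁿ = e^{nhA}(e^{nhB} − (id + hC(hA))ⁿ)U⁰ with C(hA) = φ₁(−hA)B. Moreover, for h = π/k and n = k one has C(hA) e_k = −(2i/π) λ_k e_k, and hence (id + hC(hA))ⁿ e_k = (e^{−2iλ_k} + O(h)) e_k as k → ∞. -/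

import Mathlib

/- Statement 13 (Example 6.3): exponential Euler applied to `u̇ = Au + Bu` on the
eigenvector `e = e_k` with `A e = ik e`, `B e = λ e`.  Since all operators act on `e`
by scalars, the exact flow is `U(nh) = e^{nh(ik+λ)} e` and the numerical scheme acts by
`U^{n+1} = (e^{hz} + h φ₁(hz) λ) U^n` with `z = ik`.  The error formula, the value
`C(hA) e_k = −(2i/π) λ e_k` for `h = π/k`, and the limit
`(id + hC(hA))^k e_k = (e^{−2iλ} + O(h)) e_k` are the three claims. -/

open Complex

/-- `φ₁(z) = (e^z − 1)/z`. -/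
noncomputable def phi1 (z : ℂ) : ℂ := (Complex.exp z - 1) / z

lemma keybound (c : ℂ) : ∃ K : ℝ, ∀ n : ℕ, 1 ≤ n →
    ‖(1 + c / n) ^ n - Complex.exp c‖ ≤ K / n := by
  set A := ‖c‖ with hA
  have hA0 : 0 ≤ A := norm_nonneg c
  refine ⟨max (A ^ 2 * Real.exp A) (2 * Real.exp A * (A + 1)), fun n hn => ?_⟩
  have hn0 : (0:ℝ) < n := by exact_mod_cast Nat.pos_of_ne_zero (by omega)
  have hnC : ((n:ℂ)) ≠ 0 := Nat.cast_ne_zero.mpr (by omega)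
  set w : ℂ := c / n with hw
  have habsw : ‖w‖ = A / n := by
    simp [hw, norm_div, hA]
  have h1w : ‖(1:ℂ) + w‖ ≤ Real.exp (A / n) := by
    calc ‖(1:ℂ) + w‖ ≤ 1 + ‖w‖ := by simpa using norm_add_le (1 : ℂ) w
      _ = ‖w‖ + 1 := by ring
      _ ≤ Real.exp (‖w‖) := Real.add_one_le_exp _
      _ = Real.exp (A / n) := by rw [habsw]
  have hew : ‖Complex.exp w‖ ≤ Real.exp (A / n) := by
    rw [Complex.norm_exp]
    exact Real.exp_le_exp.mpr (by rw [← habsw]; exact Complex.re_le_norm w)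
  have hexpA : Real.exp (A / n) ^ n = Real.exp A := by
    rw [← Real.exp_nat_mul]; congr 1; field_simp
  have hexpc : Complex.exp c = Complex.exp w ^ n := by
    rw [← Complex.exp_nat_mul]; congr 1; field_simp [hw]; rw [hw]; field_simp
  by_cases hcase : A ≤ n
  · -- main estimate
    have hw1 : ‖w‖ ≤ 1 := by
      rw [habsw]; exact div_le_one_of_le₀ hcase hn0.le
    have hdiff : ‖(1 + w) - Complex.exp w‖ ≤ A ^ 2 / n ^ 2 := by
      have h := Complex.norm_exp_sub_one_sub_id_le hw1
      calc ‖(1 + w) - Complex.exp w‖ = ‖Complex.exp w - 1 - w‖ := by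
            rw [← norm_neg]; congr 1; ring
        _ ≤ ‖w‖ ^ 2 := h
        _ = A ^ 2 / n ^ 2 := by rw [habsw, div_pow]
    have hsum : ‖∑ i ∈ Finset.range n, (1 + w) ^ i * Complex.exp w ^ (n - 1 - i)‖
        ≤ n * Real.exp A := by
      calc ‖∑ i ∈ Finset.range n, (1 + w) ^ i * Complex.exp w ^ (n - 1 - i)‖
          ≤ ∑ i ∈ Finset.range n, ‖(1 + w) ^ i * Complex.exp w ^ (n - 1 - i)‖ :=
            norm_sum_le _ _
        _ ≤ ∑ i ∈ Finset.range n, Real.exp A := by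
            refine Finset.sum_le_sum fun i hi => ?_
            have hi' : i < n := Finset.mem_range.mp hi
            rw [norm_mul, norm_pow, norm_pow]
            calc ‖(1:ℂ) + w‖ ^ i * ‖Complex.exp w‖ ^ (n - 1 - i)
                ≤ Real.exp (A / n) ^ i * Real.exp (A / n) ^ (n - 1 - i) := by
                  gcongr
              _ = Real.exp (A / n) ^ (n - 1) := by
                  rw [← pow_add]; congr 1; omega
              _ ≤ Real.exp (A / n) ^ n := by
                  refine pow_le_pow_right₀ (Real.one_le_exp (by positivity)) (by omega)
              _ = Real.exp A := hexpA
        _ = n * Real.exp A := by simp [mul_comm]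
    have hfac : (1 + w) ^ n - Complex.exp w ^ n
        = (∑ i ∈ Finset.range n, (1 + w) ^ i * Complex.exp w ^ (n - 1 - i))
          * ((1 + w) - Complex.exp w) := (geom_sum₂_mul _ _ n).symm
    rw [hexpc, hfac, norm_mul]
    calc ‖∑ i ∈ Finset.range n, (1 + w) ^ i * Complex.exp w ^ (n - 1 - i)‖
          * ‖(1 + w) - Complex.exp w‖
        ≤ (n * Real.exp A) * (A ^ 2 / n ^ 2) := by
          exact mul_le_mul hsum hdiff (norm_nonneg _) (by positivity)
      _ = (A ^ 2 * Real.exp A) / n := by field_simp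
      _ ≤ max (A ^ 2 * Real.exp A) (2 * Real.exp A * (A + 1)) / n := by
          gcongr; exact le_max_left _ _
  · -- crude estimate for small n
    push_neg at hcase
    have h1 : ‖(1 + w) ^ n‖ ≤ Real.exp A := by
      rw [norm_pow, ← hexpA]
      exact pow_le_pow_left₀ (norm_nonneg _) h1w n
    have h2 : ‖Complex.exp c‖ ≤ Real.exp A := by
      rw [Complex.norm_exp]
      exact Real.exp_le_exp.mpr (Complex.re_le_norm c)
    calc ‖(1 + w) ^ n - Complex.exp c‖ ≤ ‖(1 + w) ^ n‖ + ‖Complex.exp c‖ := norm_sub_le _ _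
      _ ≤ 2 * Real.exp A := by linarith
      _ ≤ (2 * Real.exp A * (A + 1)) / n := by
          rw [le_div_iff₀ hn0]
          have hn1 : (n : ℝ) ≤ A + 1 := by linarith
          nlinarith [Real.exp_pos A]
      _ ≤ max (A ^ 2 * Real.exp A) (2 * Real.exp A * (A + 1)) / n := by
          gcongr; exact le_max_right _ _

lemma stepfac (t h lam : ℂ) (ht : t ≠ 0) :
    Complex.exp t + h * phi1 t * lam = Complex.exp t * (1 + h * phi1 (-t) * lam) := by
  unfold phi1
  rw [Complex.exp_neg]
  field_simp [Complex.exp_ne_zero]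
  ring

lemma chval (lam : ℂ) : phi1 (-((Real.pi:ℂ) * Complex.I)) * lam
    = -(2 * Complex.I / (Real.pi : ℂ)) * lam := by
  unfold phi1
  rw [Complex.exp_neg, Complex.exp_pi_mul_I]
  have hpi : (Real.pi : ℂ) ≠ 0 := by
    exact_mod_cast Complex.ofReal_ne_zero.mpr Real.pi_ne_zero
  field_simp
  ring_nf
  simp [Complex.I_sq]

theorem stmt13 {Y : Type*} [NormedAddCommGroup Y] [NormedSpace ℂ Y]
    (e : Y) (he : ‖e‖ = 1) (k : ℕ) (hk : 1 ≤ k) (lam : ℂ)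
    (h z : ℂ) (hh : h = (Real.pi : ℂ) / k) (hz : z = Complex.I * k)
    (Uex Unum : ℕ → Y)
    (hUex : ∀ n : ℕ, Uex n = Complex.exp (n * h * (z + lam)) • e)
    (hU0 : Unum 0 = e)
    (hrec : ∀ n : ℕ,
      Unum (n + 1) = Complex.exp (h * z) • Unum n + (h * phi1 (h * z) * lam) • Unum n)
    (Ch : ℂ) (hCh : Ch = phi1 (-(h * z)) * lam) :
    (∀ n : ℕ, Uex n - Unum n
        = (Complex.exp (n * h * z) * (Complex.exp (n * h * lam) - (1 + h * Ch) ^ n)) • e)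
    ∧ Ch = -(2 * Complex.I / (Real.pi : ℂ)) * lam
    ∧ (∃ K : ℝ, ∀ k' : ℕ, 1 ≤ k' →
        ‖(1 + ((Real.pi : ℂ) / k') * (-(2 * Complex.I / (Real.pi : ℂ)) * lam)) ^ k'
            - Complex.exp (-(2 * Complex.I) * lam)‖ ≤ K / k') := by
  have hkC : ((k:ℂ)) ≠ 0 := Nat.cast_ne_zero.mpr (by omega)
  have hpi : (Real.pi : ℂ) ≠ 0 := by
    exact_mod_cast Complex.ofReal_ne_zero.mpr Real.pi_ne_zero
  have hhz : h * z = (Real.pi : ℂ) * Complex.I := by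
    rw [hh, hz]; field_simp
  have hhz0 : h * z ≠ 0 := by
    rw [hhz]; exact mul_ne_zero hpi Complex.I_ne_zero
  -- Part 2
  have part2 : Ch = -(2 * Complex.I / (Real.pi : ℂ)) * lam := by
    rw [hCh, hhz]; exact chval lam
  -- numerical solution in closed form
  have hNum : ∀ n : ℕ, Unum n = ((Complex.exp (h * z) * (1 + h * Ch)) ^ n) • e := by
    intro n
    induction n with
    | zero => simpa using hU0
    | succ n ih =>
      rw [hrec n, ih, smul_smul, smul_smul, ← add_smul, ← add_mul]
      congr 1
      rw [hCh, pow_succ, stepfac (h * z) h lam hhz0]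
      ring
  refine ⟨fun n => ?_, part2, ?_⟩
  · rw [hUex n, hNum n, ← sub_smul]
    congr 1
    have e1 : Complex.exp ((n:ℂ) * h * (z + lam))
        = Complex.exp ((n:ℂ) * h * z) * Complex.exp ((n:ℂ) * h * lam) := by
      rw [← Complex.exp_add]; ring_nf
    have e2 : (Complex.exp (h * z)) ^ n = Complex.exp ((n:ℂ) * h * z) := by
      rw [← Complex.exp_nat_mul]; ring_nf
    rw [e1, mul_pow, e2]
    ring
  · obtain ⟨K, hK⟩ := keybound (-(2 * Complex.I) * lam)
    refine ⟨K, fun k' hk' => ?_⟩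
    have hk'C : ((k':ℂ)) ≠ 0 := Nat.cast_ne_zero.mpr (by omega)
    have hbase : 1 + ((Real.pi : ℂ) / k') * (-(2 * Complex.I / (Real.pi : ℂ)) * lam)
        = 1 + (-(2 * Complex.I) * lam) / k' := by
      field_simp
    rw [hbase]
    exact hK k' hk'
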